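/- (Proposition 1, eDT-II part.) Let α, β ∈ A₁, and assume the adjoint linear-problem data at p₂: p₂ ∈ A₀ is invertible with Dp₂ = 0; f₂, g₂ ∈ A₀ with f₂ invertible and σ₂ ∈ A₁ satisfy Df₂ = −g₂β, Dg₂ = −f₂α − p₂σ₂, Dσ₂ = p₂g₂; set y₂ = g₂f₂⁻¹ and Ω₂ = σ₂f₂⁻¹. Define α₂ = p₂⁻¹Ω₂ and β₂ = β_x(1 + α₂β) + β((Dα₂)(Dβ) − p₂²). Then Dα₂ = y₂(1 + p₂⁻¹βΩ₂), the first Bäcklund relation α₂,ₓ = α(α₂β − 1) + α₂((Dα₂)(Dβ) − p₂²) holds automatically, and consequently W₂ := E₂(λ, p₂; α₂, β) satisfies (DW₂) + W₂†·L(λ; α, β) − L(λ; α₂, β₂)·W₂ = 0 identically in λ; i.e. Ψ ↦ W₂Ψ is a Darboux transformation of the linear problem DΨ = L(λ; α, β)Ψ. -/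

import Mathlib

open Polynomial Matrix

/-- A supercommutative superalgebra `A = A₀ ⊕ A₁` over `ℂ`. -/
structure SuperAlgebra (A : Type*) [Ring A] [Algebra ℂ A] where
  A0 : Submodule ℂ A
  A1 : Submodule ℂ A
  isCompl : IsCompl A0 A1
  algebraMap_mem : ∀ c : ℂ, algebraMap ℂ A c ∈ A0
  mul_mem00 : ∀ {a b : A}, a ∈ A0 → b ∈ A0 → a * b ∈ A0
  mul_mem01 : ∀ {a b : A}, a ∈ A0 → b ∈ A1 → a * b ∈ A1
  mul_mem10 : ∀ {a b : A}, a ∈ A1 → b ∈ A0 → a * b ∈ A1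
  mul_mem11 : ∀ {a b : A}, a ∈ A1 → b ∈ A1 → a * b ∈ A0
  even_comm : ∀ {a : A}, a ∈ A0 → ∀ b : A, a * b = b * a
  odd_anticomm : ∀ {a b : A}, a ∈ A1 → b ∈ A1 → a * b = -(b * a)

/-- An odd superderivation `D` on a superalgebra: `D(ab) = (Da)b + a†(Db)`. -/
structure OddDerivation {A : Type*} [Ring A] [Algebra ℂ A] (S : SuperAlgebra A) where
  D : A →ₗ[ℂ] A
  map_even : ∀ {a : A}, a ∈ S.A0 → D a ∈ S.A1
  map_odd : ∀ {a : A}, a ∈ S.A1 → D a ∈ S.A0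
  leibniz_even : ∀ {a : A}, a ∈ S.A0 → ∀ b : A, D (a * b) = D a * b + a * D b
  leibniz_odd : ∀ {a : A}, a ∈ S.A1 → ∀ b : A, D (a * b) = D a * b - a * D b

/-- An even (parity preserving) `ℂ`-linear derivation on a superalgebra. -/
structure EvenDerivation {A : Type*} [Ring A] [Algebra ℂ A] (S : SuperAlgebra A) where
  D : A →ₗ[ℂ] A
  map_even : ∀ {a : A}, a ∈ S.A0 → D a ∈ S.A0
  map_odd : ∀ {a : A}, a ∈ S.A1 → D a ∈ S.A1
  leibniz : ∀ a b : A, D (a * b) = D a * b + a * D b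

/-- Apply a map coefficientwise to a polynomial (extension of a derivation to
polynomials in the central even indeterminate `λ = X`). -/
noncomputable def cwise {A : Type*} [Ring A] (f : A → A) (P : Polynomial A) : Polynomial A :=
  P.sum fun n a => Polynomial.monomial n (f a)

/-- The entrywise super-parity involution `M ↦ M†` for `3 × 3` matrices having the
standard parity pattern (even entries at `(1,1), (1,2), (2,1), (2,2), (3,3)`; odd entries
at `(1,3), (2,3), (3,1), (3,2)`): it negates exactly the odd positions. -/
def sdag {R : Type*} [Ring R] (M : Matrix (Fin 3) (Fin 3) R) : Matrix (Fin 3) (Fin 3) R :=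
  Matrix.of fun i j => if (i = 2 ∧ j ≠ 2) ∨ (i ≠ 2 ∧ j = 2) then -M i j else M i j

/-- The SUSY AKNS spectral matrix `L(λ; α, β)`, with rows `[0, α, 0], [β, 0, λ], [0, λ, 0]`. -/
def Lgen {R : Type*} [Ring R] (lam a b : R) : Matrix (Fin 3) (Fin 3) R :=
  !![0, a, 0; b, 0, lam; 0, lam, 0]

/-- `L(λ; α, β)` with entries polynomial in the indeterminate `λ = X`. -/
noncomputable def Lpoly {A : Type*} [Ring A] (a b : A) : Matrix (Fin 3) (Fin 3) (Polynomial A) :=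
  Lgen (X : Polynomial A) (C a) (C b)

/-- The elementary Darboux matrix `E₁(λ, p; a, b)` (the gauge matrix of eDT-I), with
`da, db` standing for `Da, Db`. -/
def E1gen {R : Type*} [Ring R] (lam p a b da db : R) : Matrix (Fin 3) (Fin 3) R :=
  !![lam ^ 2 + (1 + a * b) * (da * db - p ^ 2), -da, lam * a;
     -db, 1 - a * b, 0;
     -(lam * b), 0, 1]

/-- The elementary Darboux matrix `E₂(λ, p; a, b)` (the gauge matrix of eDT-II). -/
def E2gen {R : Type*} [Ring R] (lam p a b da db : R) : Matrix (Fin 3) (Fin 3) R :=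
  !![1 - a * b, da, -(lam * a);
     db, (1 + a * b) * (lam ^ 2 - p ^ 2 + da * db), -(lam * (a * db));
     lam * b, lam * (b * da), lam ^ 2 * (1 + a * b) - p ^ 2]

/-- `E₁(λ, p; a, b)` with entries polynomial in `λ = X`. -/
noncomputable def E1poly {A : Type*} [Ring A] (D : A → A) (p a b : A) :
    Matrix (Fin 3) (Fin 3) (Polynomial A) :=
  E1gen (X : Polynomial A) (C p) (C a) (C b) (C (D a)) (C (D b))

/-- `E₂(λ, p; a, b)` with entries polynomial in `λ = X`. -/
noncomputable def E2poly {A : Type*} [Ring A] (D : A → A) (p a b : A) :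
    Matrix (Fin 3) (Fin 3) (Polynomial A) :=
  E2gen (X : Polynomial A) (C p) (C a) (C b) (C (D a)) (C (D b))


section Helpers
variable {A : Type*} [Ring A] [Algebra ℂ A]

lemma one_mem_A0 (S : SuperAlgebra A) : (1 : A) ∈ S.A0 := by
  simpa using S.algebraMap_mem 1

lemma sq_zero_of_odd (S : SuperAlgebra A) {x : A} (hx : x ∈ S.A1) : x * x = 0 := by
  have h := S.odd_anticomm hx hx
  have h2 : x * x + x * x = 0 := eq_neg_iff_add_eq_zero.mp h
  have h3 : (2 : ℂ) • (x * x) = 0 := by rw [two_smul]; exact h2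
  calc x * x = (2 : ℂ)⁻¹ • ((2 : ℂ) • (x * x)) := by rw [smul_smul]; norm_num
    _ = 0 := by rw [h3, smul_zero]

lemma inv_even (S : SuperAlgebra A) {u v : A} (hu : u ∈ S.A0)
    (huv : u * v = 1) (hvu : v * u = 1) : v ∈ S.A0 := by
  obtain ⟨v₀, v₁, hsum, -⟩ := Submodule.existsUnique_add_of_isCompl S.isCompl v
  have h1 : u * (v₀ : A) + u * (v₁ : A) = 1 := by rw [← mul_add, hsum, huv]
  have h2 : u * (v₁ : A) = 1 - u * (v₀ : A) := by rw [← h1]; abel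
  have hm1 : u * (v₁ : A) ∈ S.A1 := S.mul_mem01 hu v₁.2
  have hm0 : u * (v₁ : A) ∈ S.A0 := by
    rw [h2]; exact Submodule.sub_mem _ (one_mem_A0 S) (S.mul_mem00 hu v₀.2)
  have hz : u * (v₁ : A) = 0 :=
    (Submodule.disjoint_def.mp S.isCompl.disjoint) _ hm0 hm1
  have hv1 : (v₁ : A) = 0 := by
    calc (v₁ : A) = (v * u) * v₁ := by rw [hvu, one_mul]
      _ = v * (u * v₁) := by rw [mul_assoc]
      _ = 0 := by rw [hz, mul_zero]
  rw [← hsum, hv1, add_zero]; exact v₀.2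

lemma D_one (S : SuperAlgebra A) (𝒟 : OddDerivation S) : 𝒟.D 1 = 0 := by
  have h := 𝒟.leibniz_even (one_mem_A0 S) 1
  simp only [mul_one, one_mul] at h
  exact (right_eq_add.mp h)

lemma cwise_add (f : A → A) (h0 : f 0 = 0) (hadd : ∀ a b, f (a + b) = f a + f b)
    (p q : Polynomial A) : cwise f (p + q) = cwise f p + cwise f q := by
  unfold cwise
  exact Polynomial.sum_add_index p q _ (by simp [h0]) (by simp [hadd])

lemma cwise_monomial (f : A → A) (h0 : f 0 = 0) (n : ℕ) (a : A) :
    cwise f (monomial n a) = monomial n (f a) := by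
  unfold cwise
  exact Polynomial.sum_monomial_index a _ (by simp [h0])

lemma cwise_C (f : A → A) (h0 : f 0 = 0) (a : A) : cwise f (C a) = C (f a) := by
  rw [← Polynomial.monomial_zero_left, cwise_monomial f h0]; simp

lemma cwise_C_mul_X_pow (f : A → A) (h0 : f 0 = 0) (n : ℕ) (a : A) :
    cwise f (C a * X ^ n) = C (f a) * X ^ n := by
  rw [Polynomial.C_mul_X_pow_eq_monomial, cwise_monomial f h0,
    Polynomial.C_mul_X_pow_eq_monomial]

lemma cwise_C_mul_X (f : A → A) (h0 : f 0 = 0) (a : A) :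
    cwise f (C a * X) = C (f a) * X := by
  simpa using cwise_C_mul_X_pow f h0 1 a

lemma cwise_neg (f : A → A) (h0 : f 0 = 0) (hadd : ∀ a b, f (a + b) = f a + f b)
    (p : Polynomial A) : cwise f (-p) = -(cwise f p) := by
  have h := cwise_add f h0 hadd p (-p)
  simp only [add_neg_cancel] at h
  have h2 : cwise f 0 = 0 := by unfold cwise; simp
  rw [h2] at h
  have h3 : cwise f (-p) + cwise f p = 0 := by rw [add_comm]; exact h.symm
  exact eq_neg_of_add_eq_zero_left h3

end Helpers

set_option maxHeartbeats 4000000 in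
/-- **Proposition 1, eDT-II part.** With `α₂ = p₂⁻¹Ω₂` and
`β₂ = β_x(1 + α₂β) + β((Dα₂)(Dβ) − p₂²)` built from a solution `φ₂ = (f₂, g₂, σ₂)` of the
adjoint linear problem at `λ = p₂`, one has `Dα₂ = y₂(1 + p₂⁻¹βΩ₂)`, the first Bäcklund
relation `α₂,ₓ = α(α₂β − 1) + α₂((Dα₂)(Dβ) − p₂²)` holds automatically, and
`W₂ = E₂(λ, p₂; α₂, β)` satisfies the Darboux covariance condition
`(DW₂) + W₂†·L(λ; α, β) − L(λ; α₂, β₂)·W₂ = 0` identically in `λ`. -/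
theorem eDT2_is_darboux {A : Type*} [Ring A] [Algebra ℂ A]
    (S : SuperAlgebra A) (𝒟 : OddDerivation S)
    (α β : A) (hα : α ∈ S.A1) (hβ : β ∈ S.A1)
    (p₂ p2inv : A) (hp₂ : p₂ ∈ S.A0) (hDp₂ : 𝒟.D p₂ = 0)
    (hp2inv : p₂ * p2inv = 1 ∧ p2inv * p₂ = 1)
    (f₂ g₂ σ₂ : A) (hf₂ : f₂ ∈ S.A0) (hg₂ : g₂ ∈ S.A0) (hσ₂ : σ₂ ∈ S.A1)
    (f2inv : A) (hf2inv : f₂ * f2inv = 1 ∧ f2inv * f₂ = 1)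
    (hDf₂ : 𝒟.D f₂ = -(g₂ * β)) (hDg₂ : 𝒟.D g₂ = -(f₂ * α) - p₂ * σ₂)
    (hDσ₂ : 𝒟.D σ₂ = p₂ * g₂)
    (y₂ Ω₂ α₂ β₂ : A) (hy₂ : y₂ = g₂ * f2inv) (hΩ₂ : Ω₂ = σ₂ * f2inv)
    (hα₂ : α₂ = p2inv * Ω₂)
    (hβ₂ : β₂ = (𝒟.D (𝒟.D β)) * (1 + α₂ * β) + β * ((𝒟.D α₂) * (𝒟.D β) - p₂ ^ 2)) :
    (𝒟.D α₂ = y₂ * (1 + p2inv * β * Ω₂))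
      ∧ (𝒟.D (𝒟.D α₂) = α * (α₂ * β - 1) + α₂ * ((𝒟.D α₂) * (𝒟.D β) - p₂ ^ 2))
      ∧ ((E2poly (fun x => 𝒟.D x) p₂ α₂ β).map (cwise fun x => 𝒟.D x)
          + sdag (E2poly (fun x => 𝒟.D x) p₂ α₂ β) * Lpoly α β
          - Lpoly α₂ β₂ * E2poly (fun x => 𝒟.D x) p₂ α₂ β = 0) := by
  obtain ⟨hpq, hqp⟩ := hp2inv
  obtain ⟨hff, hfif⟩ := hf2inv
  have h10 : (1 : A) ∈ S.A0 := one_mem_A0 S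
  have hD1 : 𝒟.D 1 = 0 := D_one S 𝒟
  have hfi0 : f2inv ∈ S.A0 := inv_even S hf₂ hff hfif
  have hqi0 : p2inv ∈ S.A0 := inv_even S hp₂ hpq hqp
  have hy0 : y₂ ∈ S.A0 := hy₂ ▸ S.mul_mem00 hg₂ hfi0
  have hΩ1 : Ω₂ ∈ S.A1 := hΩ₂ ▸ S.mul_mem10 hσ₂ hfi0
  have ha21 : α₂ ∈ S.A1 := hα₂ ▸ S.mul_mem01 hqi0 hΩ1
  have hdb0 : 𝒟.D β ∈ S.A0 := 𝒟.map_odd hβ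
  have hda0 : 𝒟.D α₂ ∈ S.A0 := 𝒟.map_odd ha21
  have hddb1 : 𝒟.D (𝒟.D β) ∈ S.A1 := 𝒟.map_even hdb0
  -- rule set (part 1/2)
  have cb_q_p : p2inv * p₂ = p₂ * p2inv := (S.even_comm hp₂ (p2inv)).symm
  have cn_q_p : ∀ t : A, p2inv * (p₂ * t) = p₂ * (p2inv * t) := fun t => by rw [← mul_assoc, cb_q_p, mul_assoc]
  have cb_f_p : f₂ * p₂ = p₂ * f₂ := (S.even_comm hp₂ (f₂)).symm
  have cn_f_p : ∀ t : A, f₂ * (p₂ * t) = p₂ * (f₂ * t) := fun t => by rw [← mul_assoc, cb_f_p, mul_assoc]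
  have cb_fi_p : f2inv * p₂ = p₂ * f2inv := (S.even_comm hp₂ (f2inv)).symm
  have cn_fi_p : ∀ t : A, f2inv * (p₂ * t) = p₂ * (f2inv * t) := fun t => by rw [← mul_assoc, cb_fi_p, mul_assoc]
  have cb_g_p : g₂ * p₂ = p₂ * g₂ := (S.even_comm hp₂ (g₂)).symm
  have cn_g_p : ∀ t : A, g₂ * (p₂ * t) = p₂ * (g₂ * t) := fun t => by rw [← mul_assoc, cb_g_p, mul_assoc]
  have cb_db_p : (𝒟.D β) * p₂ = p₂ * (𝒟.D β) := (S.even_comm hp₂ ((𝒟.D β))).symm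
  have cn_db_p : ∀ t : A, (𝒟.D β) * (p₂ * t) = p₂ * ((𝒟.D β) * t) := fun t => by rw [← mul_assoc, cb_db_p, mul_assoc]
  have cb_al_p : α * p₂ = p₂ * α := (S.even_comm hp₂ (α)).symm
  have cn_al_p : ∀ t : A, α * (p₂ * t) = p₂ * (α * t) := fun t => by rw [← mul_assoc, cb_al_p, mul_assoc]
  have cb_be_p : β * p₂ = p₂ * β := (S.even_comm hp₂ (β)).symm
  have cn_be_p : ∀ t : A, β * (p₂ * t) = p₂ * (β * t) := fun t => by rw [← mul_assoc, cb_be_p, mul_assoc]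
  have cb_sg_p : σ₂ * p₂ = p₂ * σ₂ := (S.even_comm hp₂ (σ₂)).symm
  have cn_sg_p : ∀ t : A, σ₂ * (p₂ * t) = p₂ * (σ₂ * t) := fun t => by rw [← mul_assoc, cb_sg_p, mul_assoc]
  have cb_f_q : f₂ * p2inv = p2inv * f₂ := (S.even_comm hqi0 (f₂)).symm
  have cn_f_q : ∀ t : A, f₂ * (p2inv * t) = p2inv * (f₂ * t) := fun t => by rw [← mul_assoc, cb_f_q, mul_assoc]
  have cb_fi_q : f2inv * p2inv = p2inv * f2inv := (S.even_comm hqi0 (f2inv)).symm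
  have cn_fi_q : ∀ t : A, f2inv * (p2inv * t) = p2inv * (f2inv * t) := fun t => by rw [← mul_assoc, cb_fi_q, mul_assoc]
  have cb_g_q : g₂ * p2inv = p2inv * g₂ := (S.even_comm hqi0 (g₂)).symm
  have cn_g_q : ∀ t : A, g₂ * (p2inv * t) = p2inv * (g₂ * t) := fun t => by rw [← mul_assoc, cb_g_q, mul_assoc]
  have cb_db_q : (𝒟.D β) * p2inv = p2inv * (𝒟.D β) := (S.even_comm hqi0 ((𝒟.D β))).symm
  have cn_db_q : ∀ t : A, (𝒟.D β) * (p2inv * t) = p2inv * ((𝒟.D β) * t) := fun t => by rw [← mul_assoc, cb_db_q, mul_assoc]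
  have cb_al_q : α * p2inv = p2inv * α := (S.even_comm hqi0 (α)).symm
  have cn_al_q : ∀ t : A, α * (p2inv * t) = p2inv * (α * t) := fun t => by rw [← mul_assoc, cb_al_q, mul_assoc]
  have cb_be_q : β * p2inv = p2inv * β := (S.even_comm hqi0 (β)).symm
  have cn_be_q : ∀ t : A, β * (p2inv * t) = p2inv * (β * t) := fun t => by rw [← mul_assoc, cb_be_q, mul_assoc]
  have cb_sg_q : σ₂ * p2inv = p2inv * σ₂ := (S.even_comm hqi0 (σ₂)).symm
  have cn_sg_q : ∀ t : A, σ₂ * (p2inv * t) = p2inv * (σ₂ * t) := fun t => by rw [← mul_assoc, cb_sg_q, mul_assoc]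
  have cb_fi_f : f2inv * f₂ = f₂ * f2inv := (S.even_comm hf₂ (f2inv)).symm
  have cn_fi_f : ∀ t : A, f2inv * (f₂ * t) = f₂ * (f2inv * t) := fun t => by rw [← mul_assoc, cb_fi_f, mul_assoc]
  have cb_g_f : g₂ * f₂ = f₂ * g₂ := (S.even_comm hf₂ (g₂)).symm
  have cn_g_f : ∀ t : A, g₂ * (f₂ * t) = f₂ * (g₂ * t) := fun t => by rw [← mul_assoc, cb_g_f, mul_assoc]
  have cb_db_f : (𝒟.D β) * f₂ = f₂ * (𝒟.D β) := (S.even_comm hf₂ ((𝒟.D β))).symm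
  have cn_db_f : ∀ t : A, (𝒟.D β) * (f₂ * t) = f₂ * ((𝒟.D β) * t) := fun t => by rw [← mul_assoc, cb_db_f, mul_assoc]
  have cb_al_f : α * f₂ = f₂ * α := (S.even_comm hf₂ (α)).symm
  have cn_al_f : ∀ t : A, α * (f₂ * t) = f₂ * (α * t) := fun t => by rw [← mul_assoc, cb_al_f, mul_assoc]
  have cb_be_f : β * f₂ = f₂ * β := (S.even_comm hf₂ (β)).symm
  have cn_be_f : ∀ t : A, β * (f₂ * t) = f₂ * (β * t) := fun t => by rw [← mul_assoc, cb_be_f, mul_assoc]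
  have cb_sg_f : σ₂ * f₂ = f₂ * σ₂ := (S.even_comm hf₂ (σ₂)).symm
  have cn_sg_f : ∀ t : A, σ₂ * (f₂ * t) = f₂ * (σ₂ * t) := fun t => by rw [← mul_assoc, cb_sg_f, mul_assoc]
  have cb_g_fi : g₂ * f2inv = f2inv * g₂ := (S.even_comm hfi0 (g₂)).symm
  have cn_g_fi : ∀ t : A, g₂ * (f2inv * t) = f2inv * (g₂ * t) := fun t => by rw [← mul_assoc, cb_g_fi, mul_assoc]
  have cb_db_fi : (𝒟.D β) * f2inv = f2inv * (𝒟.D β) := (S.even_comm hfi0 ((𝒟.D β))).symm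
  have cn_db_fi : ∀ t : A, (𝒟.D β) * (f2inv * t) = f2inv * ((𝒟.D β) * t) := fun t => by rw [← mul_assoc, cb_db_fi, mul_assoc]
  have cb_al_fi : α * f2inv = f2inv * α := (S.even_comm hfi0 (α)).symm
  have cn_al_fi : ∀ t : A, α * (f2inv * t) = f2inv * (α * t) := fun t => by rw [← mul_assoc, cb_al_fi, mul_assoc]
  have cb_be_fi : β * f2inv = f2inv * β := (S.even_comm hfi0 (β)).symm
  have cn_be_fi : ∀ t : A, β * (f2inv * t) = f2inv * (β * t) := fun t => by rw [← mul_assoc, cb_be_fi, mul_assoc]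
  have cb_sg_fi : σ₂ * f2inv = f2inv * σ₂ := (S.even_comm hfi0 (σ₂)).symm
  have cn_sg_fi : ∀ t : A, σ₂ * (f2inv * t) = f2inv * (σ₂ * t) := fun t => by rw [← mul_assoc, cb_sg_fi, mul_assoc]
  have cb_db_g : (𝒟.D β) * g₂ = g₂ * (𝒟.D β) := (S.even_comm hg₂ ((𝒟.D β))).symm
  have cn_db_g : ∀ t : A, (𝒟.D β) * (g₂ * t) = g₂ * ((𝒟.D β) * t) := fun t => by rw [← mul_assoc, cb_db_g, mul_assoc]
  have cb_al_g : α * g₂ = g₂ * α := (S.even_comm hg₂ (α)).symm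
  have cn_al_g : ∀ t : A, α * (g₂ * t) = g₂ * (α * t) := fun t => by rw [← mul_assoc, cb_al_g, mul_assoc]
  have cb_be_g : β * g₂ = g₂ * β := (S.even_comm hg₂ (β)).symm
  have cn_be_g : ∀ t : A, β * (g₂ * t) = g₂ * (β * t) := fun t => by rw [← mul_assoc, cb_be_g, mul_assoc]
  have cb_sg_g : σ₂ * g₂ = g₂ * σ₂ := (S.even_comm hg₂ (σ₂)).symm
  have cn_sg_g : ∀ t : A, σ₂ * (g₂ * t) = g₂ * (σ₂ * t) := fun t => by rw [← mul_assoc, cb_sg_g, mul_assoc]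
  have cb_al_db : α * (𝒟.D β) = (𝒟.D β) * α := (S.even_comm hdb0 (α)).symm
  have cn_al_db : ∀ t : A, α * ((𝒟.D β) * t) = (𝒟.D β) * (α * t) := fun t => by rw [← mul_assoc, cb_al_db, mul_assoc]
  have cb_be_db : β * (𝒟.D β) = (𝒟.D β) * β := (S.even_comm hdb0 (β)).symm
  have cn_be_db : ∀ t : A, β * ((𝒟.D β) * t) = (𝒟.D β) * (β * t) := fun t => by rw [← mul_assoc, cb_be_db, mul_assoc]
  have cb_sg_db : σ₂ * (𝒟.D β) = (𝒟.D β) * σ₂ := (S.even_comm hdb0 (σ₂)).symm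
  have cn_sg_db : ∀ t : A, σ₂ * ((𝒟.D β) * t) = (𝒟.D β) * (σ₂ * t) := fun t => by rw [← mul_assoc, cb_sg_db, mul_assoc]
  have cb_be_al : β * α = -(α * β) := S.odd_anticomm hβ hα
  have cn_be_al : ∀ t : A, β * (α * t) = -(α * (β * t)) := fun t => by rw [← mul_assoc, cb_be_al, neg_mul, mul_assoc]
  have cb_sg_al : σ₂ * α = -(α * σ₂) := S.odd_anticomm hσ₂ hα
  have cn_sg_al : ∀ t : A, σ₂ * (α * t) = -(α * (σ₂ * t)) := fun t => by rw [← mul_assoc, cb_sg_al, neg_mul, mul_assoc]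
  have csq_al : α * α = 0 := sq_zero_of_odd S hα
  have csqn_al : ∀ t : A, α * (α * t) = 0 := fun t => by rw [← mul_assoc, csq_al, zero_mul]
  have cb_sg_be : σ₂ * β = -(β * σ₂) := S.odd_anticomm hσ₂ hβ
  have cn_sg_be : ∀ t : A, σ₂ * (β * t) = -(β * (σ₂ * t)) := fun t => by rw [← mul_assoc, cb_sg_be, neg_mul, mul_assoc]
  have csq_be : β * β = 0 := sq_zero_of_odd S hβ
  have csqn_be : ∀ t : A, β * (β * t) = 0 := fun t => by rw [← mul_assoc, csq_be, zero_mul]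
  have csq_sg : σ₂ * σ₂ = 0 := sq_zero_of_odd S hσ₂
  have csqn_sg : ∀ t : A, σ₂ * (σ₂ * t) = 0 := fun t => by rw [← mul_assoc, csq_sg, zero_mul]
  have cinv_p0 : p₂ * p2inv = 1 := hpq
  have cinv_p : ∀ t : A, p₂ * (p2inv * t) = t := fun t => by rw [← mul_assoc, hpq, one_mul]
  have cinv_f0 : f₂ * f2inv = 1 := hff
  have cinv_f : ∀ t : A, f₂ * (f2inv * t) = t := fun t => by rw [← mul_assoc, hff, one_mul]
  -- D of inverses
  have h2 : f₂ * 𝒟.D f2inv = g₂ * β * f2inv := by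
    have h := 𝒟.leibniz_even hf₂ f2inv
    rw [hff, hD1, hDf₂, neg_mul] at h
    have h' := h.symm
    exact (neg_add_eq_zero.mp h').symm
  have hDfi : 𝒟.D f2inv = f2inv * (g₂ * β * f2inv) := by
    conv_lhs => rw [← one_mul (𝒟.D f2inv), ← hfif, mul_assoc, h2]
  have hDpi : 𝒟.D p2inv = 0 := by
    have h := 𝒟.leibniz_even hp₂ p2inv
    rw [hpq, hD1, hDp₂, zero_mul, zero_add] at h
    calc 𝒟.D p2inv = 1 * 𝒟.D p2inv := (one_mul _).symm
      _ = p2inv * (p₂ * 𝒟.D p2inv) := by rw [← hqp, mul_assoc]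
      _ = 0 := by rw [← h, mul_zero]
  have hDΩ : 𝒟.D Ω₂ = p₂ * y₂ + y₂ * (β * Ω₂) := by
    rw [hy₂, hΩ₂, 𝒟.leibniz_odd hσ₂, hDσ₂, hDfi]
    simp only [mul_assoc, cb_q_p, cn_q_p, cb_f_p, cn_f_p, cb_fi_p, cn_fi_p, cb_g_p, cn_g_p, cb_db_p, cn_db_p, cb_al_p, cn_al_p, cb_be_p, cn_be_p, cb_sg_p, cn_sg_p, cb_f_q, cn_f_q, cb_fi_q, cn_fi_q, cb_g_q, cn_g_q, cb_db_q, cn_db_q, cb_al_q, cn_al_q, cb_be_q, cn_be_q, cb_sg_q, cn_sg_q, cb_fi_f, cn_fi_f, cb_g_f, cn_g_f, cb_db_f, cn_db_f, cb_al_f, cn_al_f, cb_be_f, cn_be_f, cb_sg_f, cn_sg_f, cb_g_fi, cn_g_fi, cb_db_fi, cn_db_fi, cb_al_fi, cn_al_fi, cb_be_fi, cn_be_fi, cb_sg_fi, cn_sg_fi, cb_db_g, cn_db_g, cb_al_g, cn_al_g, cb_be_g, cn_be_g, cb_sg_g, cn_sg_g, cb_al_db, cn_al_db, cb_be_db, cn_be_db,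 cb_sg_db, cn_sg_db, cb_be_al, cn_be_al, cb_sg_al, cn_sg_al, csq_al, csqn_al, cb_sg_be, cn_sg_be, csq_be, csqn_be, csq_sg, csqn_sg, cinv_p0, cinv_p, cinv_f0, cinv_f,
      neg_mul, mul_neg, neg_neg, mul_add, add_mul, mul_sub, sub_mul, mul_one, one_mul,
      mul_zero, zero_mul]
    try abel
  have goal1 : 𝒟.D α₂ = y₂ * (1 + p2inv * β * Ω₂) := by
    rw [hα₂, 𝒟.leibniz_even hqi0, hDpi, zero_mul, zero_add, hDΩ, hy₂, hΩ₂]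
    simp only [mul_assoc, cb_q_p, cn_q_p, cb_f_p, cn_f_p, cb_fi_p, cn_fi_p, cb_g_p, cn_g_p, cb_db_p, cn_db_p, cb_al_p, cn_al_p, cb_be_p, cn_be_p, cb_sg_p, cn_sg_p, cb_f_q, cn_f_q, cb_fi_q, cn_fi_q, cb_g_q, cn_g_q, cb_db_q, cn_db_q, cb_al_q, cn_al_q, cb_be_q, cn_be_q, cb_sg_q, cn_sg_q, cb_fi_f, cn_fi_f, cb_g_f, cn_g_f, cb_db_f, cn_db_f, cb_al_f, cn_al_f, cb_be_f, cn_be_f, cb_sg_f, cn_sg_f, cb_g_fi, cn_g_fi, cb_db_fi, cn_db_fi, cb_al_fi, cn_al_fi, cb_be_fi, cn_be_fi, cb_sg_fi, cn_sg_fi, cb_db_g, cn_db_g, cb_al_g, cn_al_g, cb_be_g, cn_be_g, cb_sg_g, cn_sg_g, cb_al_db, cn_al_db, cb_be_db, cn_be_db, cb_sg_db, cn_sg_db, cb_be_al, cn_be_al, cb_sg_al, cn_sg_al, csq_al, csqn_al, cb_sg_be, cn_sg_be, csq_be, csqn_be, csq_sg, csqn_sg, cinv_p0, cinv_p, cinv_f0,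 cinv_f,
      neg_mul, mul_neg, neg_neg, mul_add, add_mul, mul_sub, sub_mul, mul_one, one_mul,
      mul_zero, zero_mul]
    try abel
  have hpb1 : p2inv * β ∈ S.A1 := S.mul_mem01 hqi0 hβ
  have hDpb : 𝒟.D (p2inv * β) = p2inv * 𝒟.D β := by
    rw [𝒟.leibniz_even hqi0, hDpi, zero_mul, zero_add]
  have hDy : 𝒟.D y₂ = (-(f₂ * α) - p₂ * σ₂) * f2inv + g₂ * (f2inv * (g₂ * β * f2inv)) := by
    rw [hy₂, 𝒟.leibniz_even hg₂, hDg₂, hDfi]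
  have goal2 : 𝒟.D (𝒟.D α₂) = α * (α₂ * β - 1) + α₂ * (𝒟.D α₂ * 𝒟.D β - p₂ ^ 2) := by
    conv_lhs => rw [goal1]
    rw [𝒟.leibniz_even hy0, map_add, hD1, 𝒟.leibniz_odd hpb1, hDpb, hDΩ, hDy, goal1,
      hα₂, hy₂, hΩ₂, pow_two]
    simp only [mul_assoc, cb_q_p, cn_q_p, cb_f_p, cn_f_p, cb_fi_p, cn_fi_p, cb_g_p, cn_g_p, cb_db_p, cn_db_p, cb_al_p, cn_al_p, cb_be_p, cn_be_p, cb_sg_p, cn_sg_p, cb_f_q, cn_f_q, cb_fi_q, cn_fi_q, cb_g_q, cn_g_q, cb_db_q, cn_db_q, cb_al_q, cn_al_q, cb_be_q, cn_be_q, cb_sg_q, cn_sg_q, cb_fi_f, cn_fi_f, cb_g_f, cn_g_f, cb_db_f, cn_db_f, cb_al_f, cn_al_f, cb_be_f, cn_be_f, cb_sg_f, cn_sg_f, cb_g_fi, cn_g_fi, cb_db_fi, cn_db_fi, cb_al_fi, cn_al_fi, cb_be_fi, cn_be_fi, cb_sg_fi, cn_sg_fi, cb_db_g, cn_db_g, cb_al_g,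 cn_al_g, cb_be_g, cn_be_g, cb_sg_g, cn_sg_g, cb_al_db, cn_al_db, cb_be_db, cn_be_db, cb_sg_db, cn_sg_db, cb_be_al, cn_be_al, cb_sg_al, cn_sg_al, csq_al, csqn_al, cb_sg_be, cn_sg_be, csq_be, csqn_be, csq_sg, csqn_sg, cinv_p0, cinv_p, cinv_f0, cinv_f,
      neg_mul, mul_neg, neg_neg, mul_add, add_mul, mul_sub, sub_mul, mul_one, one_mul,
      mul_zero, zero_mul, zero_add, add_zero]
    try abel
  refine ⟨goal1, goal2, ?_⟩
  -- part 3 scalar rules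
  have swb_da_p : (𝒟.D α₂) * p₂ = p₂ * (𝒟.D α₂) := (S.even_comm hp₂ ((𝒟.D α₂))).symm
  have swn_da_p : ∀ t : A, (𝒟.D α₂) * (p₂ * t) = p₂ * ((𝒟.D α₂) * t) := fun t => by rw [← mul_assoc, swb_da_p, mul_assoc]
  have swb_db_p : (𝒟.D β) * p₂ = p₂ * (𝒟.D β) := (S.even_comm hp₂ ((𝒟.D β))).symm
  have swn_db_p : ∀ t : A, (𝒟.D β) * (p₂ * t) = p₂ * ((𝒟.D β) * t) := fun t => by rw [← mul_assoc, swb_db_p, mul_assoc]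
  have swb_al_p : α * p₂ = p₂ * α := (S.even_comm hp₂ (α)).symm
  have swn_al_p : ∀ t : A, α * (p₂ * t) = p₂ * (α * t) := fun t => by rw [← mul_assoc, swb_al_p, mul_assoc]
  have swb_be_p : β * p₂ = p₂ * β := (S.even_comm hp₂ (β)).symm
  have swn_be_p : ∀ t : A, β * (p₂ * t) = p₂ * (β * t) := fun t => by rw [← mul_assoc, swb_be_p, mul_assoc]
  have swb_a2_p : α₂ * p₂ = p₂ * α₂ := (S.even_comm hp₂ (α₂)).symm
  have swn_a2_p : ∀ t : A, α₂ * (p₂ * t) = p₂ * (α₂ * t) := fun t => by rw [← mul_assoc, swb_a2_p, mul_assoc]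
  have swb_ddb_p : (𝒟.D (𝒟.D β)) * p₂ = p₂ * (𝒟.D (𝒟.D β)) := (S.even_comm hp₂ ((𝒟.D (𝒟.D β)))).symm
  have swn_ddb_p : ∀ t : A, (𝒟.D (𝒟.D β)) * (p₂ * t) = p₂ * ((𝒟.D (𝒟.D β)) * t) := fun t => by rw [← mul_assoc, swb_ddb_p, mul_assoc]
  have swb_db_da : (𝒟.D β) * (𝒟.D α₂) = (𝒟.D α₂) * (𝒟.D β) := (S.even_comm hda0 ((𝒟.D β))).symm
  have swn_db_da : ∀ t : A, (𝒟.D β) * ((𝒟.D α₂) * t) = (𝒟.D α₂) * ((𝒟.D β) * t) := fun t => by rw [← mul_assoc, swb_db_da, mul_assoc]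
  have swb_al_da : α * (𝒟.D α₂) = (𝒟.D α₂) * α := (S.even_comm hda0 (α)).symm
  have swn_al_da : ∀ t : A, α * ((𝒟.D α₂) * t) = (𝒟.D α₂) * (α * t) := fun t => by rw [← mul_assoc, swb_al_da, mul_assoc]
  have swb_be_da : β * (𝒟.D α₂) = (𝒟.D α₂) * β := (S.even_comm hda0 (β)).symm
  have swn_be_da : ∀ t : A, β * ((𝒟.D α₂) * t) = (𝒟.D α₂) * (β * t) := fun t => by rw [← mul_assoc, swb_be_da, mul_assoc]
  have swb_a2_da : α₂ * (𝒟.D α₂) = (𝒟.D α₂) * α₂ := (S.even_comm hda0 (α₂)).symm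
  have swn_a2_da : ∀ t : A, α₂ * ((𝒟.D α₂) * t) = (𝒟.D α₂) * (α₂ * t) := fun t => by rw [← mul_assoc, swb_a2_da, mul_assoc]
  have swb_ddb_da : (𝒟.D (𝒟.D β)) * (𝒟.D α₂) = (𝒟.D α₂) * (𝒟.D (𝒟.D β)) := (S.even_comm hda0 ((𝒟.D (𝒟.D β)))).symm
  have swn_ddb_da : ∀ t : A, (𝒟.D (𝒟.D β)) * ((𝒟.D α₂) * t) = (𝒟.D α₂) * ((𝒟.D (𝒟.D β)) * t) := fun t => by rw [← mul_assoc, swb_ddb_da, mul_assoc]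
  have swb_al_db : α * (𝒟.D β) = (𝒟.D β) * α := (S.even_comm hdb0 (α)).symm
  have swn_al_db : ∀ t : A, α * ((𝒟.D β) * t) = (𝒟.D β) * (α * t) := fun t => by rw [← mul_assoc, swb_al_db, mul_assoc]
  have swb_be_db : β * (𝒟.D β) = (𝒟.D β) * β := (S.even_comm hdb0 (β)).symm
  have swn_be_db : ∀ t : A, β * ((𝒟.D β) * t) = (𝒟.D β) * (β * t) := fun t => by rw [← mul_assoc, swb_be_db, mul_assoc]
  have swb_a2_db : α₂ * (𝒟.D β) = (𝒟.D β) * α₂ := (S.even_comm hdb0 (α₂)).symm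
  have swn_a2_db : ∀ t : A, α₂ * ((𝒟.D β) * t) = (𝒟.D β) * (α₂ * t) := fun t => by rw [← mul_assoc, swb_a2_db, mul_assoc]
  have swb_ddb_db : (𝒟.D (𝒟.D β)) * (𝒟.D β) = (𝒟.D β) * (𝒟.D (𝒟.D β)) := (S.even_comm hdb0 ((𝒟.D (𝒟.D β)))).symm
  have swn_ddb_db : ∀ t : A, (𝒟.D (𝒟.D β)) * ((𝒟.D β) * t) = (𝒟.D β) * ((𝒟.D (𝒟.D β)) * t) := fun t => by rw [← mul_assoc, swb_ddb_db, mul_assoc]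
  have swb_be_al : β * α = -(α * β) := S.odd_anticomm hβ hα
  have swn_be_al : ∀ t : A, β * (α * t) = -(α * (β * t)) := fun t => by rw [← mul_assoc, swb_be_al, neg_mul, mul_assoc]
  have swb_a2_al : α₂ * α = -(α * α₂) := S.odd_anticomm ha21 hα
  have swn_a2_al : ∀ t : A, α₂ * (α * t) = -(α * (α₂ * t)) := fun t => by rw [← mul_assoc, swb_a2_al, neg_mul, mul_assoc]
  have swb_ddb_al : (𝒟.D (𝒟.D β)) * α = -(α * (𝒟.D (𝒟.D β))) := S.odd_anticomm hddb1 hα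
  have swn_ddb_al : ∀ t : A, (𝒟.D (𝒟.D β)) * (α * t) = -(α * ((𝒟.D (𝒟.D β)) * t)) := fun t => by rw [← mul_assoc, swb_ddb_al, neg_mul, mul_assoc]
  have swsq_al : α * α = 0 := sq_zero_of_odd S hα
  have swsqn_al : ∀ t : A, α * (α * t) = 0 := fun t => by rw [← mul_assoc, swsq_al, zero_mul]
  have swb_a2_be : α₂ * β = -(β * α₂) := S.odd_anticomm ha21 hβ
  have swn_a2_be : ∀ t : A, α₂ * (β * t) = -(β * (α₂ * t)) := fun t => by rw [← mul_assoc, swb_a2_be, neg_mul, mul_assoc]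
  have swb_ddb_be : (𝒟.D (𝒟.D β)) * β = -(β * (𝒟.D (𝒟.D β))) := S.odd_anticomm hddb1 hβ
  have swn_ddb_be : ∀ t : A, (𝒟.D (𝒟.D β)) * (β * t) = -(β * ((𝒟.D (𝒟.D β)) * t)) := fun t => by rw [← mul_assoc, swb_ddb_be, neg_mul, mul_assoc]
  have swsq_be : β * β = 0 := sq_zero_of_odd S hβ
  have swsqn_be : ∀ t : A, β * (β * t) = 0 := fun t => by rw [← mul_assoc, swsq_be, zero_mul]
  have swb_ddb_a2 : (𝒟.D (𝒟.D β)) * α₂ = -(α₂ * (𝒟.D (𝒟.D β))) := S.odd_anticomm hddb1 ha21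
  have swn_ddb_a2 : ∀ t : A, (𝒟.D (𝒟.D β)) * (α₂ * t) = -(α₂ * ((𝒟.D (𝒟.D β)) * t)) := fun t => by rw [← mul_assoc, swb_ddb_a2, neg_mul, mul_assoc]
  have swsq_a2 : α₂ * α₂ = 0 := sq_zero_of_odd S ha21
  have swsqn_a2 : ∀ t : A, α₂ * (α₂ * t) = 0 := fun t => by rw [← mul_assoc, swsq_a2, zero_mul]
  have swsq_ddb : (𝒟.D (𝒟.D β)) * (𝒟.D (𝒟.D β)) = 0 := sq_zero_of_odd S hddb1
  have swsqn_ddb : ∀ t : A, (𝒟.D (𝒟.D β)) * ((𝒟.D (𝒟.D β)) * t) = 0 := fun t => by rw [← mul_assoc, swsq_ddb, zero_mul]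
  -- part 3 polynomial-level rules
  have wb_da_p : C ((𝒟.D α₂)) * C (p₂) = C (p₂) * C ((𝒟.D α₂)) := by rw [← Polynomial.C_mul, swb_da_p, Polynomial.C_mul]
  have wn_da_p : ∀ t : A[X], C ((𝒟.D α₂)) * (C (p₂) * t) = C (p₂) * (C ((𝒟.D α₂)) * t) := fun t => by rw [← mul_assoc, wb_da_p, mul_assoc]
  have wb_db_p : C ((𝒟.D β)) * C (p₂) = C (p₂) * C ((𝒟.D β)) := by rw [← Polynomial.C_mul, swb_db_p, Polynomial.C_mul]
  have wn_db_p : ∀ t : A[X], C ((𝒟.D β)) * (C (p₂) * t) = C (p₂) * (C ((𝒟.D β)) * t) := fun t => by rw [← mul_assoc, wb_db_p, mul_assoc]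
  have wb_al_p : C (α) * C (p₂) = C (p₂) * C (α) := by rw [← Polynomial.C_mul, swb_al_p, Polynomial.C_mul]
  have wn_al_p : ∀ t : A[X], C (α) * (C (p₂) * t) = C (p₂) * (C (α) * t) := fun t => by rw [← mul_assoc, wb_al_p, mul_assoc]
  have wb_be_p : C (β) * C (p₂) = C (p₂) * C (β) := by rw [← Polynomial.C_mul, swb_be_p, Polynomial.C_mul]
  have wn_be_p : ∀ t : A[X], C (β) * (C (p₂) * t) = C (p₂) * (C (β) * t) := fun t => by rw [← mul_assoc, wb_be_p, mul_assoc]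
  have wb_a2_p : C (α₂) * C (p₂) = C (p₂) * C (α₂) := by rw [← Polynomial.C_mul, swb_a2_p, Polynomial.C_mul]
  have wn_a2_p : ∀ t : A[X], C (α₂) * (C (p₂) * t) = C (p₂) * (C (α₂) * t) := fun t => by rw [← mul_assoc, wb_a2_p, mul_assoc]
  have wb_ddb_p : C ((𝒟.D (𝒟.D β))) * C (p₂) = C (p₂) * C ((𝒟.D (𝒟.D β))) := by rw [← Polynomial.C_mul, swb_ddb_p, Polynomial.C_mul]
  have wn_ddb_p : ∀ t : A[X], C ((𝒟.D (𝒟.D β))) * (C (p₂) * t) = C (p₂) * (C ((𝒟.D (𝒟.D β))) * t) := fun t => by rw [← mul_assoc, wb_ddb_p, mul_assoc]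
  have wx_p : (X : A[X]) * C (p₂) = C (p₂) * X := X_mul_C _
  have wxn_p : ∀ t : A[X], X * (C (p₂) * t) = C (p₂) * (X * t) := fun t => by rw [← mul_assoc, wx_p, mul_assoc]
  have wb_db_da : C ((𝒟.D β)) * C ((𝒟.D α₂)) = C ((𝒟.D α₂)) * C ((𝒟.D β)) := by rw [← Polynomial.C_mul, swb_db_da, Polynomial.C_mul]
  have wn_db_da : ∀ t : A[X], C ((𝒟.D β)) * (C ((𝒟.D α₂)) * t) = C ((𝒟.D α₂)) * (C ((𝒟.D β)) * t) := fun t => by rw [← mul_assoc, wb_db_da, mul_assoc]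
  have wb_al_da : C (α) * C ((𝒟.D α₂)) = C ((𝒟.D α₂)) * C (α) := by rw [← Polynomial.C_mul, swb_al_da, Polynomial.C_mul]
  have wn_al_da : ∀ t : A[X], C (α) * (C ((𝒟.D α₂)) * t) = C ((𝒟.D α₂)) * (C (α) * t) := fun t => by rw [← mul_assoc, wb_al_da, mul_assoc]
  have wb_be_da : C (β) * C ((𝒟.D α₂)) = C ((𝒟.D α₂)) * C (β) := by rw [← Polynomial.C_mul, swb_be_da, Polynomial.C_mul]
  have wn_be_da : ∀ t : A[X], C (β) * (C ((𝒟.D α₂)) * t) = C ((𝒟.D α₂)) * (C (β) * t) := fun t => by rw [← mul_assoc, wb_be_da, mul_assoc]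
  have wb_a2_da : C (α₂) * C ((𝒟.D α₂)) = C ((𝒟.D α₂)) * C (α₂) := by rw [← Polynomial.C_mul, swb_a2_da, Polynomial.C_mul]
  have wn_a2_da : ∀ t : A[X], C (α₂) * (C ((𝒟.D α₂)) * t) = C ((𝒟.D α₂)) * (C (α₂) * t) := fun t => by rw [← mul_assoc, wb_a2_da, mul_assoc]
  have wb_ddb_da : C ((𝒟.D (𝒟.D β))) * C ((𝒟.D α₂)) = C ((𝒟.D α₂)) * C ((𝒟.D (𝒟.D β))) := by rw [← Polynomial.C_mul, swb_ddb_da, Polynomial.C_mul]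
  have wn_ddb_da : ∀ t : A[X], C ((𝒟.D (𝒟.D β))) * (C ((𝒟.D α₂)) * t) = C ((𝒟.D α₂)) * (C ((𝒟.D (𝒟.D β))) * t) := fun t => by rw [← mul_assoc, wb_ddb_da, mul_assoc]
  have wx_da : (X : A[X]) * C ((𝒟.D α₂)) = C ((𝒟.D α₂)) * X := X_mul_C _
  have wxn_da : ∀ t : A[X], X * (C ((𝒟.D α₂)) * t) = C ((𝒟.D α₂)) * (X * t) := fun t => by rw [← mul_assoc, wx_da, mul_assoc]
  have wb_al_db : C (α) * C ((𝒟.D β)) = C ((𝒟.D β)) * C (α) := by rw [← Polynomial.C_mul, swb_al_db, Polynomial.C_mul]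
  have wn_al_db : ∀ t : A[X], C (α) * (C ((𝒟.D β)) * t) = C ((𝒟.D β)) * (C (α) * t) := fun t => by rw [← mul_assoc, wb_al_db, mul_assoc]
  have wb_be_db : C (β) * C ((𝒟.D β)) = C ((𝒟.D β)) * C (β) := by rw [← Polynomial.C_mul, swb_be_db, Polynomial.C_mul]
  have wn_be_db : ∀ t : A[X], C (β) * (C ((𝒟.D β)) * t) = C ((𝒟.D β)) * (C (β) * t) := fun t => by rw [← mul_assoc, wb_be_db, mul_assoc]
  have wb_a2_db : C (α₂) * C ((𝒟.D β)) = C ((𝒟.D β)) * C (α₂) := by rw [← Polynomial.C_mul, swb_a2_db, Polynomial.C_mul]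
  have wn_a2_db : ∀ t : A[X], C (α₂) * (C ((𝒟.D β)) * t) = C ((𝒟.D β)) * (C (α₂) * t) := fun t => by rw [← mul_assoc, wb_a2_db, mul_assoc]
  have wb_ddb_db : C ((𝒟.D (𝒟.D β))) * C ((𝒟.D β)) = C ((𝒟.D β)) * C ((𝒟.D (𝒟.D β))) := by rw [← Polynomial.C_mul, swb_ddb_db, Polynomial.C_mul]
  have wn_ddb_db : ∀ t : A[X], C ((𝒟.D (𝒟.D β))) * (C ((𝒟.D β)) * t) = C ((𝒟.D β)) * (C ((𝒟.D (𝒟.D β))) * t) := fun t => by rw [← mul_assoc, wb_ddb_db, mul_assoc]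
  have wx_db : (X : A[X]) * C ((𝒟.D β)) = C ((𝒟.D β)) * X := X_mul_C _
  have wxn_db : ∀ t : A[X], X * (C ((𝒟.D β)) * t) = C ((𝒟.D β)) * (X * t) := fun t => by rw [← mul_assoc, wx_db, mul_assoc]
  have wb_be_al : C (β) * C (α) = -(C (α) * C (β)) := by rw [← Polynomial.C_mul, swb_be_al, map_neg, Polynomial.C_mul]
  have wn_be_al : ∀ t : A[X], C (β) * (C (α) * t) = -(C (α) * (C (β) * t)) := fun t => by rw [← mul_assoc, wb_be_al, neg_mul, mul_assoc]
  have wb_a2_al : C (α₂) * C (α) = -(C (α) * C (α₂)) := by rw [← Polynomial.C_mul, swb_a2_al, map_neg, Polynomial.C_mul]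
  have wn_a2_al : ∀ t : A[X], C (α₂) * (C (α) * t) = -(C (α) * (C (α₂) * t)) := fun t => by rw [← mul_assoc, wb_a2_al, neg_mul, mul_assoc]
  have wb_ddb_al : C ((𝒟.D (𝒟.D β))) * C (α) = -(C (α) * C ((𝒟.D (𝒟.D β)))) := by rw [← Polynomial.C_mul, swb_ddb_al, map_neg, Polynomial.C_mul]
  have wn_ddb_al : ∀ t : A[X], C ((𝒟.D (𝒟.D β))) * (C (α) * t) = -(C (α) * (C ((𝒟.D (𝒟.D β))) * t)) := fun t => by rw [← mul_assoc, wb_ddb_al, neg_mul, mul_assoc]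
  have wsq_al : C (α) * C (α) = 0 := by rw [← Polynomial.C_mul, swsq_al, map_zero]
  have wsqn_al : ∀ t : A[X], C (α) * (C (α) * t) = 0 := fun t => by rw [← mul_assoc, wsq_al, zero_mul]
  have wx_al : (X : A[X]) * C (α) = C (α) * X := X_mul_C _
  have wxn_al : ∀ t : A[X], X * (C (α) * t) = C (α) * (X * t) := fun t => by rw [← mul_assoc, wx_al, mul_assoc]
  have wb_a2_be : C (α₂) * C (β) = -(C (β) * C (α₂)) := by rw [← Polynomial.C_mul, swb_a2_be, map_neg, Polynomial.C_mul]
  have wn_a2_be : ∀ t : A[X], C (α₂) * (C (β) * t) = -(C (β) * (C (α₂) * t)) := fun t => by rw [← mul_assoc, wb_a2_be, neg_mul, mul_assoc]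
  have wb_ddb_be : C ((𝒟.D (𝒟.D β))) * C (β) = -(C (β) * C ((𝒟.D (𝒟.D β)))) := by rw [← Polynomial.C_mul, swb_ddb_be, map_neg, Polynomial.C_mul]
  have wn_ddb_be : ∀ t : A[X], C ((𝒟.D (𝒟.D β))) * (C (β) * t) = -(C (β) * (C ((𝒟.D (𝒟.D β))) * t)) := fun t => by rw [← mul_assoc, wb_ddb_be, neg_mul, mul_assoc]
  have wsq_be : C (β) * C (β) = 0 := by rw [← Polynomial.C_mul, swsq_be, map_zero]
  have wsqn_be : ∀ t : A[X], C (β) * (C (β) * t) = 0 := fun t => by rw [← mul_assoc, wsq_be, zero_mul]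
  have wx_be : (X : A[X]) * C (β) = C (β) * X := X_mul_C _
  have wxn_be : ∀ t : A[X], X * (C (β) * t) = C (β) * (X * t) := fun t => by rw [← mul_assoc, wx_be, mul_assoc]
  have wb_ddb_a2 : C ((𝒟.D (𝒟.D β))) * C (α₂) = -(C (α₂) * C ((𝒟.D (𝒟.D β)))) := by rw [← Polynomial.C_mul, swb_ddb_a2, map_neg, Polynomial.C_mul]
  have wn_ddb_a2 : ∀ t : A[X], C ((𝒟.D (𝒟.D β))) * (C (α₂) * t) = -(C (α₂) * (C ((𝒟.D (𝒟.D β))) * t)) := fun t => by rw [← mul_assoc, wb_ddb_a2, neg_mul, mul_assoc]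
  have wsq_a2 : C (α₂) * C (α₂) = 0 := by rw [← Polynomial.C_mul, swsq_a2, map_zero]
  have wsqn_a2 : ∀ t : A[X], C (α₂) * (C (α₂) * t) = 0 := fun t => by rw [← mul_assoc, wsq_a2, zero_mul]
  have wx_a2 : (X : A[X]) * C (α₂) = C (α₂) * X := X_mul_C _
  have wxn_a2 : ∀ t : A[X], X * (C (α₂) * t) = C (α₂) * (X * t) := fun t => by rw [← mul_assoc, wx_a2, mul_assoc]
  have wsq_ddb : C ((𝒟.D (𝒟.D β))) * C ((𝒟.D (𝒟.D β))) = 0 := by rw [← Polynomial.C_mul, swsq_ddb, map_zero]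
  have wsqn_ddb : ∀ t : A[X], C ((𝒟.D (𝒟.D β))) * (C ((𝒟.D (𝒟.D β))) * t) = 0 := fun t => by rw [← mul_assoc, wsq_ddb, zero_mul]
  have wx_ddb : (X : A[X]) * C ((𝒟.D (𝒟.D β))) = C ((𝒟.D (𝒟.D β))) * X := X_mul_C _
  have wxn_ddb : ∀ t : A[X], X * (C ((𝒟.D (𝒟.D β))) * t) = C ((𝒟.D (𝒟.D β))) * (X * t) := fun t => by rw [← mul_assoc, wx_ddb, mul_assoc]
  -- D computations
  have h1ab0 : (1 : A) + α₂ * β ∈ S.A0 := S.A0.add_mem h10 (S.mul_mem11 ha21 hβ)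
  have hdp2sq : 𝒟.D (p₂ ^ 2) = 0 := by
    rw [pow_two, 𝒟.leibniz_even hp₂, hDp₂, zero_mul, mul_zero, add_zero]
  have hs1 : 𝒟.D (1 - α₂ * β) = α₂ * 𝒟.D β - 𝒟.D α₂ * β := by
    rw [map_sub, hD1, 𝒟.leibniz_odd ha21, zero_sub, neg_sub]
  have hs_c2 : 𝒟.D (1 + α₂ * β) = 𝒟.D α₂ * β - α₂ * 𝒟.D β := by
    rw [map_add, hD1, zero_add, 𝒟.leibniz_odd ha21]
  have hs_c1 : 𝒟.D ((1 + α₂ * β) * (𝒟.D α₂ * 𝒟.D β - p₂ ^ 2)) =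
      (𝒟.D α₂ * β - α₂ * 𝒟.D β) * (𝒟.D α₂ * 𝒟.D β - p₂ ^ 2)
        + (1 + α₂ * β) * (𝒟.D (𝒟.D α₂) * 𝒟.D β + 𝒟.D α₂ * 𝒟.D (𝒟.D β)) := by
    rw [𝒟.leibniz_even h1ab0, hs_c2, map_sub, hdp2sq, sub_zero, 𝒟.leibniz_even hda0]
  have hs_a2db : 𝒟.D (α₂ * 𝒟.D β) = 𝒟.D α₂ * 𝒟.D β - α₂ * 𝒟.D (𝒟.D β) := 𝒟.leibniz_odd ha21 _
  have hs_bda : 𝒟.D (β * 𝒟.D α₂) = 𝒟.D β * 𝒟.D α₂ - β * 𝒟.D (𝒟.D α₂) := 𝒟.leibniz_odd hβ _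
  have hs_negp2 : 𝒟.D (-(p₂ ^ 2)) = 0 := by rw [map_neg, hdp2sq, neg_zero]
  -- cwise computations
  have f0 : (fun x : A => 𝒟.D x) 0 = 0 := map_zero 𝒟.D
  have fadd : ∀ a b : A, (fun x : A => 𝒟.D x) (a + b)
      = (fun x : A => 𝒟.D x) a + (fun x : A => 𝒟.D x) b := fun a b => map_add 𝒟.D a b
  have cw00 : cwise (fun x : A => 𝒟.D x) (1 - C α₂ * C β) = C (𝒟.D (1 - α₂ * β)) := by
    rw [show (1 : A[X]) - C α₂ * C β = C (1 - α₂ * β) by rw [C_sub, C_1, Polynomial.C_mul],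
      cwise_C _ f0]
  have cw01 : cwise (fun x : A => 𝒟.D x) (C (𝒟.D α₂)) = C (𝒟.D (𝒟.D α₂)) := cwise_C _ f0 _
  have cw02 : cwise (fun x : A => 𝒟.D x) (-(C α₂ * X)) = -(C (𝒟.D α₂) * X) := by
    rw [cwise_neg _ f0 fadd, cwise_C_mul_X _ f0]
  have cw10 : cwise (fun x : A => 𝒟.D x) (C (𝒟.D β)) = C (𝒟.D (𝒟.D β)) := cwise_C _ f0 _
  have cw11 : cwise (fun x : A => 𝒟.D x)
        ((1 + C α₂ * C β) * (X ^ 2 - C p₂ ^ 2 + C (𝒟.D α₂) * C (𝒟.D β)))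
      = C (𝒟.D ((1 + α₂ * β) * (𝒟.D α₂ * 𝒟.D β - p₂ ^ 2))) + C (𝒟.D (1 + α₂ * β)) * X ^ 2 := by
    rw [show (1 + C α₂ * C β) * (X ^ 2 - C p₂ ^ 2 + C (𝒟.D α₂) * C (𝒟.D β))
        = C ((1 + α₂ * β) * (𝒟.D α₂ * 𝒟.D β - p₂ ^ 2)) + C (1 + α₂ * β) * X ^ 2 by
      try simp only [C_add, C_1, C_mul, C_sub, map_pow]; noncomm_ring]
    rw [cwise_add _ f0 fadd, cwise_C _ f0, cwise_C_mul_X_pow _ f0]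
  have cw12 : cwise (fun x : A => 𝒟.D x) (-(X * (C α₂ * C (𝒟.D β))))
      = -(C (𝒟.D (α₂ * 𝒟.D β)) * X) := by
    rw [show (X : A[X]) * (C α₂ * C (𝒟.D β)) = C (α₂ * 𝒟.D β) * X by
      rw [Polynomial.X_mul, Polynomial.C_mul]]
    rw [cwise_neg _ f0 fadd, cwise_C_mul_X _ f0]
  have cw20 : cwise (fun x : A => 𝒟.D x) (C β * X) = C (𝒟.D β) * X := cwise_C_mul_X _ f0 _
  have cw21 : cwise (fun x : A => 𝒟.D x) (X * (C β * C (𝒟.D α₂)))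
      = C (𝒟.D (β * 𝒟.D α₂)) * X := by
    rw [show (X : A[X]) * (C β * C (𝒟.D α₂)) = C (β * 𝒟.D α₂) * X by
      rw [Polynomial.X_mul, Polynomial.C_mul]]
    rw [cwise_C_mul_X _ f0]
  have cw22 : cwise (fun x : A => 𝒟.D x) (X ^ 2 * (1 + C α₂ * C β) - C p₂ ^ 2)
      = C (𝒟.D (1 + α₂ * β)) * X ^ 2 + C (𝒟.D (-(p₂ ^ 2))) := by
    rw [show (X : A[X]) ^ 2 * (1 + C α₂ * C β) - C p₂ ^ 2
        = C (1 + α₂ * β) * X ^ 2 + C (-(p₂ ^ 2)) by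
      try simp only [C_add, C_1, C_mul, C_neg, map_pow]
      rw [Polynomial.X_pow_mul]; noncomm_ring]
    rw [cwise_add _ f0 fadd, cwise_C _ f0, cwise_C_mul_X_pow _ f0]
  -- the matrix identity, entrywise
  rw [← Matrix.ext_iff]
  intro i j
  fin_cases i <;> fin_cases j <;>
    (simp [Matrix.add_apply, Matrix.sub_apply, Matrix.map_apply, Matrix.mul_apply,
      Fin.sum_univ_succ, sdag, Lpoly, Lgen, E2poly, E2gen]
     try simp only [cw00, cw01, cw02, cw10, cw11, cw12, cw20, cw21, cw22]
     try simp only [hs1, hs_c1, hs_c2, hs_a2db, hs_bda, hs_negp2, goal2, hβ₂]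
     try simp only [C_add, C_sub, C_mul, C_neg, C_1, map_pow, C_0]
     try simp only [pow_two, mul_assoc, wb_da_p, wn_da_p, wb_db_p, wn_db_p, wb_al_p, wn_al_p, wb_be_p, wn_be_p, wb_a2_p, wn_a2_p, wb_ddb_p, wn_ddb_p, wx_p, wxn_p, wb_db_da, wn_db_da, wb_al_da, wn_al_da, wb_be_da, wn_be_da, wb_a2_da, wn_a2_da, wb_ddb_da, wn_ddb_da, wx_da, wxn_da, wb_al_db, wn_al_db, wb_be_db, wn_be_db, wb_a2_db, wn_a2_db, wb_ddb_db, wn_ddb_db, wx_db, wxn_db, wb_be_al, wn_be_al, wb_a2_al, wn_a2_al, wb_ddb_al, wn_ddb_al, wsq_al, wsqn_al, wx_al, wxn_al, wb_a2_be, wn_a2_be, wb_ddb_be, wn_ddb_be, wsq_be, wsqn_be, wx_be, wxn_be, wb_ddb_a2, wn_ddb_a2, wsq_a2, wsqn_a2, wx_a2, wxn_a2, wsq_ddb, wsqn_ddb, wx_ddb, wxn_ddb,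
      neg_mul, mul_neg, neg_neg, mul_add, add_mul, mul_sub, sub_mul, mul_one, one_mul,
      mul_zero, zero_mul, add_zero, zero_add]
     try abel)
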